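/- Let I be an ideal on ℕ, S nonempty, B = (B_i)_{i∈S} a family of non-negative matrices with Σ_k b_{nk}^{(i)} < ∞ for all n, i, and Σ_k b_{nk}^{(i)} → 1 along I uniformly in i ∈ S. Let s = (s_n) be a bounded real sequence, a ∈ ℝ, such that s is B^I-summable to a (i.e., Σ_k b_{nk}^{(i)} s_k → a along I uniformly in i) and J_{B,I}-limsup s_n = a. Then s is B^I-statistically convergent to a. -/

import Mathlib

/-- An ideal on ℕ: nonempty collection of subsets, not containing ℕ,
closed under subsets and finite unions. -/
def IsIdeal (I : Set (Set ℕ)) : Prop :=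
  I.Nonempty ∧ Set.univ ∉ I ∧ (∀ A ∈ I, ∀ B, B ⊆ A → B ∈ I) ∧ ∀ A ∈ I, ∀ B ∈ I, A ∪ B ∈ I

/-- Convergence of `g n i` to `g0 i` along the ideal `I`, uniformly in `i ∈ S`. -/
def UnifConvAlong {S : Type*} (I : Set (Set ℕ)) (g : ℕ → S → ℝ) (g0 : S → ℝ) : Prop :=
  ∀ ε > 0, ∃ E ∈ I, ∀ i : S, {n : ℕ | ε ≤ |g n i - g0 i|} ⊆ E

/-- The collection `J_{B,I}` of sets `K ⊆ ℕ` whose matrix transforms tend to 0 along `I`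
uniformly in `i ∈ S`. -/
def matIdeal {S : Type*} (I : Set (Set ℕ)) (b : S → ℕ → ℕ → ℝ) : Set (Set ℕ) :=
  {K : Set ℕ | UnifConvAlong I (fun n i => ∑' k, b i n k * K.indicator 1 k) (fun _ => 0)}

/-- `I`-limit superior of a real sequence. -/
noncomputable def idealLimSup (I : Set (Set ℕ)) (s : ℕ → ℝ) : ℝ :=
  sSup {t : ℝ | {n : ℕ | t < s n} ∉ I}

/-- `I`-limit inferior of a real sequence. -/
noncomputable def idealLimInf (I : Set (Set ℕ)) (s : ℕ → ℝ) : ℝ :=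
  sInf {t : ℝ | {n : ℕ | s n < t} ∉ I}

/-- `I`-convergence of a real sequence to `a`. -/
def IdealConv (I : Set (Set ℕ)) (s : ℕ → ℝ) (a : ℝ) : Prop :=
  ∀ ε > 0, {n : ℕ | ε ≤ |s n - a|} ∈ I

/-- `B^I`-statistical convergence of `s` to `a`. -/
def BStatConv {S : Type*} (I : Set (Set ℕ)) (b : S → ℕ → ℕ → ℝ) (s : ℕ → ℝ) (a : ℝ) : Prop :=
  ∀ ε > 0, UnifConvAlong I
    (fun n i => ∑' k, b i n k * Set.indicator {k : ℕ | ε ≤ |s k - a|} 1 k) (fun _ => 0)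

section Aux

variable {S : Type*}

private lemma ind_nonneg (K : Set ℕ) (k : ℕ) : (0:ℝ) ≤ K.indicator 1 k :=
  Set.indicator_nonneg (fun _ _ => zero_le_one) k

private lemma ind_le_one (K : Set ℕ) (k : ℕ) : K.indicator (1 : ℕ → ℝ) k ≤ 1 := by
  by_cases h : k ∈ K
  · simp [Set.indicator_of_mem h]
  · simp [Set.indicator_of_notMem h]

private lemma summable_ind (b : S → ℕ → ℕ → ℝ) (hb : ∀ i n k, 0 ≤ b i n k)
    (hrow : ∀ (i : S) (n : ℕ), Summable fun k => b i n k) (i : S) (n : ℕ) (K : Set ℕ) :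
    Summable fun k => b i n k * K.indicator 1 k := by
  refine Summable.of_nonneg_of_le
    (fun k => mul_nonneg (hb i n k) (ind_nonneg K k)) (fun k => ?_) (hrow i n)
  calc b i n k * K.indicator 1 k ≤ b i n k * 1 :=
        mul_le_mul_of_nonneg_left (ind_le_one K k) (hb i n k)
    _ = b i n k := mul_one _

private lemma matIdeal_empty {I : Set (Set ℕ)} (hI : IsIdeal I) (b : S → ℕ → ℕ → ℝ) :
    (∅ : Set ℕ) ∈ matIdeal I b := by
  intro ε hε
  obtain ⟨E, hE⟩ := hI.1
  refine ⟨E, hE, fun i n hn => ?_⟩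
  exfalso
  simp only [Set.mem_setOf_eq, Set.indicator_empty, Pi.zero_apply, mul_zero, tsum_zero,
    sub_zero, abs_zero] at hn
  linarith

private lemma gt_mem_matIdeal {I : Set (Set ℕ)} (hI : IsIdeal I) (b : S → ℕ → ℕ → ℝ)
    (s : ℕ → ℝ) {R : ℝ} (hR : ∀ n, |s n| ≤ R) {a : ℝ}
    (hls : idealLimSup (matIdeal I b) s = a) {t : ℝ} (ht : a < t) :
    {n : ℕ | t < s n} ∈ matIdeal I b := by
  by_contra h
  have hub : ∀ u ∈ {u : ℝ | {n : ℕ | u < s n} ∉ matIdeal I b}, u ≤ R := by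
    intro u hu
    by_contra hu'
    push_neg at hu'
    refine hu ?_
    have he : {n : ℕ | u < s n} = (∅ : Set ℕ) := by
      ext n
      simp only [Set.mem_setOf_eq, Set.mem_empty_iff_false, iff_false, not_lt]
      exact le_of_lt (lt_of_le_of_lt (le_trans (le_abs_self _) (hR n)) hu')
    rw [he]
    exact matIdeal_empty hI b
  have h2 : t ≤ sSup {u : ℝ | {n : ℕ | u < s n} ∉ matIdeal I b} :=
    le_csSup ⟨R, fun u hu => hub u hu⟩ h
  unfold idealLimSup at hls
  rw [hls] at h2
  linarith

private lemma key_ineq (b : S → ℕ → ℕ → ℝ) (hb : ∀ i n k, 0 ≤ b i n k)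
    (hrow : ∀ (i : S) (n : ℕ), Summable fun k => b i n k)
    (s : ℕ → ℝ) {R : ℝ} (hR : ∀ n, |s n| ≤ R) (a : ℝ) {ε θ : ℝ} (hε : 0 < ε) (hθ : 0 < θ)
    (i : S) (n : ℕ) :
    ε * (∑' k, b i n k * Set.indicator {k : ℕ | s k ≤ a - ε} 1 k)
      ≤ (a * (∑' k, b i n k) - ∑' k, b i n k * s k)
        + (|a| + R) * (∑' k, b i n k * Set.indicator {k : ℕ | a + θ < s k} 1 k)
        + θ * (∑' k, b i n k) := by
  have hbs : Summable fun k => b i n k * s k := by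
    refine Summable.of_norm_bounded ((hrow i n).mul_right R) (fun k => ?_)
    rw [Real.norm_eq_abs, abs_mul, abs_of_nonneg (hb i n k)]
    exact mul_le_mul_of_nonneg_left (hR k) (hb i n k)
  have hneg := summable_ind b hb hrow i n {k : ℕ | s k ≤ a - ε}
  have hpos := summable_ind b hb hrow i n {k : ℕ | a + θ < s k}
  have hg : Summable fun k =>
      ε * (b i n k * Set.indicator {k : ℕ | s k ≤ a - ε} 1 k)
      - (|a| + R) * (b i n k * Set.indicator {k : ℕ | a + θ < s k} 1 k) - θ * b i n k :=
    ((hneg.mul_left ε).sub (hpos.mul_left (|a| + R))).sub ((hrow i n).mul_left θ)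
  have hfe : (fun k => b i n k * (a - s k)) = fun k => a * b i n k - b i n k * s k := by
    funext k; ring
  have hf : Summable fun k => b i n k * (a - s k) := by
    rw [hfe]; exact ((hrow i n).mul_left a).sub hbs
  have hpt : ∀ k, ε * (b i n k * Set.indicator {k : ℕ | s k ≤ a - ε} 1 k)
      - (|a| + R) * (b i n k * Set.indicator {k : ℕ | a + θ < s k} 1 k) - θ * b i n k
      ≤ b i n k * (a - s k) := by
    intro k
    have hbk := hb i n k
    by_cases h1 : k ∈ {k : ℕ | s k ≤ a - ε}
    · have h2 : k ∉ {k : ℕ | a + θ < s k} := by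
        simp only [Set.mem_setOf_eq] at h1 ⊢
        push_neg
        linarith
      rw [Set.indicator_of_mem h1, Set.indicator_of_notMem h2]
      simp only [Set.mem_setOf_eq] at h1
      simp only [Pi.one_apply, mul_one, mul_zero]
      have h3 : ε ≤ a - s k := by linarith
      nlinarith [mul_le_mul_of_nonneg_left h3 hbk]
    · rw [Set.indicator_of_notMem h1]
      by_cases h2 : k ∈ {k : ℕ | a + θ < s k}
      · rw [Set.indicator_of_mem h2]
        simp only [Pi.one_apply, mul_one, mul_zero]
        have h3 : -(|a| + R) ≤ a - s k := by
          have h4 := (abs_le.mp (hR k)).2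
          have h5 := neg_abs_le a
          linarith
        nlinarith [mul_le_mul_of_nonneg_left h3 hbk]
      · rw [Set.indicator_of_notMem h2]
        simp only [Set.mem_setOf_eq, not_lt] at h2
        simp only [mul_zero]
        have h3 : -θ ≤ a - s k := by linarith
        nlinarith [mul_le_mul_of_nonneg_left h3 hbk]
  have hts := Summable.tsum_le_tsum hpt hg hf
  rw [Summable.tsum_sub ((hneg.mul_left ε).sub (hpos.mul_left (|a| + R))) ((hrow i n).mul_left θ),
      Summable.tsum_sub (hneg.mul_left ε) (hpos.mul_left (|a| + R)),
      tsum_mul_left, tsum_mul_left, tsum_mul_left] at hts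
  rw [hfe, Summable.tsum_sub ((hrow i n).mul_left a) hbs, tsum_mul_left] at hts
  linarith

end Aux

set_option maxHeartbeats 1600000 in
/-- If a bounded real sequence is `B^I`-summable to `a` and `J_{B,I}-limsup s = a`,
then `s` is `B^I`-statistically convergent to `a`. -/
theorem stmt14 {S : Type*} [Nonempty S] (I : Set (Set ℕ)) (hI : IsIdeal I)
    (b : S → ℕ → ℕ → ℝ) (hb : ∀ i n k, 0 ≤ b i n k)
    (hplus : ∃ i0 : S, 0 < ⨅ n : ℕ, ∑' k, b i0 n k)
    (hrow : ∀ (i : S) (n : ℕ), Summable fun k => b i n k)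
    (h1 : UnifConvAlong I (fun n i => ∑' k, b i n k) (fun _ => 1))
    (s : ℕ → ℝ) (hbdd : ∃ R : ℝ, ∀ n, |s n| ≤ R) (a : ℝ)
    (hsum : UnifConvAlong I (fun n i => ∑' k, b i n k * s k) (fun _ => a))
    (hls : idealLimSup (matIdeal I b) s = a) :
    BStatConv I b s a := by
  classical
  obtain ⟨R, hR⟩ := hbdd
  have hR0 : 0 ≤ R := le_trans (abs_nonneg _) (hR 0)
  have hC0 : 0 ≤ |a| + R := add_nonneg (abs_nonneg a) hR0
  have hC1 : (0:ℝ) < |a| + R + 1 := by linarith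
  intro ε hε δ hδ
  have hθpos : 0 < ε * δ / 16 := by positivity
  -- positive side, with margin ε/2
  have hpos2 : {k : ℕ | a + ε / 2 < s k} ∈ matIdeal I b :=
    gt_mem_matIdeal hI b s hR hls (by linarith)
  obtain ⟨E0, hE0, hE0'⟩ := hpos2 (δ / 2) (by linarith)
  obtain ⟨E1, hE1, hE1'⟩ := hsum (ε * δ / 16) hθpos
  have hηpos : 0 < min 1 (ε * δ / (16 * (|a| + 1))) := lt_min one_pos (by positivity)
  obtain ⟨E2, hE2, hE2'⟩ := h1 (min 1 (ε * δ / (16 * (|a| + 1)))) hηpos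
  have hK1 : {k : ℕ | a + ε * δ / 16 < s k} ∈ matIdeal I b :=
    gt_mem_matIdeal hI b s hR hls (by linarith)
  obtain ⟨E3, hE3, hE3'⟩ := hK1 (ε * δ / (16 * (|a| + R + 1)))
    (div_pos (mul_pos hε hδ) (mul_pos (by norm_num) hC1))
  refine ⟨E0 ∪ (E1 ∪ (E2 ∪ E3)),
    hI.2.2.2 _ hE0 _ (hI.2.2.2 _ hE1 _ (hI.2.2.2 _ hE2 _ hE3)), fun i n hn => ?_⟩
  by_contra hnE
  simp only [Set.mem_union, not_or] at hnE
  obtain ⟨hn0, hn1, hn2, hn3⟩ := hnE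
  set T := ∑' k, b i n k with hTdef
  set A := ∑' k, b i n k * s k with hAdef
  set P := ∑' k, b i n k * Set.indicator {k : ℕ | a + ε * δ / 16 < s k} 1 k with hPdef
  set P2 := ∑' k, b i n k * Set.indicator {k : ℕ | a + ε / 2 < s k} 1 k with hP2def
  set N := ∑' k, b i n k * Set.indicator {k : ℕ | s k ≤ a - ε} 1 k with hNdef
  set Q := ∑' k, b i n k * Set.indicator {k : ℕ | ε ≤ |s k - a|} 1 k with hQdef
  have hA : |A - a| < ε * δ / 16 := by
    by_contra h
    push_neg at h
    exact hn1 (hE1' i h)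
  have hT : |T - 1| < min 1 (ε * δ / (16 * (|a| + 1))) := by
    by_contra h
    push_neg at h
    exact hn2 (hE2' i h)
  have hP : |P - 0| < ε * δ / (16 * (|a| + R + 1)) := by
    by_contra h
    push_neg at h
    exact hn3 (hE3' i h)
  have hP2' : |P2 - 0| < δ / 2 := by
    by_contra h
    push_neg at h
    exact hn0 (hE0' i h)
  have hPnn : 0 ≤ P := tsum_nonneg fun k => mul_nonneg (hb i n k) (ind_nonneg _ k)
  have hP2nn : 0 ≤ P2 := tsum_nonneg fun k => mul_nonneg (hb i n k) (ind_nonneg _ k)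
  have hQnn : 0 ≤ Q := tsum_nonneg fun k => mul_nonneg (hb i n k) (ind_nonneg _ k)
  have hPlt : P < ε * δ / (16 * (|a| + R + 1)) := by
    rw [sub_zero] at hP
    exact lt_of_le_of_lt (le_abs_self P) hP
  have hP2lt : P2 < δ / 2 := by
    rw [sub_zero] at hP2'
    exact lt_of_le_of_lt (le_abs_self P2) hP2'
  have hT2 : T < 2 := by
    have := abs_lt.mp (lt_of_lt_of_le hT (min_le_left _ _))
    linarith [this.2]
  have habsT : |T - 1| < ε * δ / (16 * (|a| + 1)) := lt_of_lt_of_le hT (min_le_right _ _)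
  have ha1 : (0:ℝ) < |a| + 1 := by positivity
  have e1 : (|a| + 1) * (ε * δ / (16 * (|a| + 1))) = ε * δ / 16 := by
    field_simp
  have e2 : (|a| + R + 1) * (ε * δ / (16 * (|a| + R + 1))) = ε * δ / 16 := by
    field_simp
  have key := key_ineq b hb hrow s hR a hε hθpos i n
  rw [← hTdef, ← hAdef, ← hPdef, ← hNdef] at key
  -- bound a*T - A
  have q1 : a * T - A ≤ |a| * |T - 1| + |A - a| := by
    have l1 := le_abs_self (a * (T - 1))
    have l2 := neg_abs_le (A - a)
    rw [abs_mul] at l1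
    nlinarith
  have q2 : |a| * |T - 1| < ε * δ / 16 := by
    have i1 : |a| * |T - 1| ≤ (|a| + 1) * |T - 1| := by
      nlinarith [abs_nonneg (T - 1)]
    have i2 : (|a| + 1) * |T - 1| < (|a| + 1) * (ε * δ / (16 * (|a| + 1))) :=
      mul_lt_mul_of_pos_left habsT ha1
    rw [e1] at i2
    linarith
  have q3 : (|a| + R) * P < ε * δ / 16 := by
    have i1 : (|a| + R) * P ≤ (|a| + R + 1) * P := by nlinarith
    have i2 : (|a| + R + 1) * P < (|a| + R + 1) * (ε * δ / (16 * (|a| + R + 1))) :=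
      mul_lt_mul_of_pos_left hPlt hC1
    rw [e2] at i2
    linarith
  have q4 : ε * δ / 16 * T ≤ ε * δ / 16 * 2 :=
    mul_le_mul_of_nonneg_left hT2.le hθpos.le
  have hNlt : N < δ / 2 := by
    have h5 : ε * N < ε * (δ / 2) := by
      calc ε * N ≤ (a * T - A) + (|a| + R) * P + ε * δ / 16 * T := key
        _ < ε * δ / 16 + ε * δ / 16 + ε * δ / 16 + ε * δ / 16 * 2 := by linarith
        _ ≤ ε * (δ / 2) := by ring_nf; nlinarith
    exact (mul_lt_mul_iff_right₀ hε).mp h5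
  -- Q ≤ P2 + N
  have hQle : Q ≤ P2 + N := by
    have hs2 := summable_ind b hb hrow i n {k : ℕ | a + ε / 2 < s k}
    have hsn := summable_ind b hb hrow i n {k : ℕ | s k ≤ a - ε}
    have hptQ : ∀ k, b i n k * Set.indicator {k : ℕ | ε ≤ |s k - a|} 1 k
        ≤ b i n k * Set.indicator {k : ℕ | a + ε / 2 < s k} 1 k
          + b i n k * Set.indicator {k : ℕ | s k ≤ a - ε} 1 k := by
      intro k
      have hbk := hb i n k
      have hnn1 := mul_nonneg hbk (ind_nonneg {k : ℕ | a + ε / 2 < s k} k)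
      have hnn2 := mul_nonneg hbk (ind_nonneg {k : ℕ | s k ≤ a - ε} k)
      by_cases hk : k ∈ {k : ℕ | ε ≤ |s k - a|}
      · rw [Set.indicator_of_mem hk]
        simp only [Pi.one_apply, mul_one]
        simp only [Set.mem_setOf_eq] at hk
        rcases le_abs.mp hk with h | h
        · have hkm : k ∈ {k : ℕ | a + ε / 2 < s k} := by
            simp only [Set.mem_setOf_eq]; linarith
          rw [Set.indicator_of_mem hkm]
          simp only [Pi.one_apply, mul_one]
          linarith
        · have hkm : k ∈ {k : ℕ | s k ≤ a - ε} := by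
            simp only [Set.mem_setOf_eq]; linarith
          rw [Set.indicator_of_mem hkm]
          simp only [Pi.one_apply, mul_one]
          linarith
      · rw [Set.indicator_of_notMem hk, mul_zero]
        linarith
    have := Summable.tsum_le_tsum hptQ (summable_ind b hb hrow i n {k : ℕ | ε ≤ |s k - a|})
      (hs2.add hsn)
    rwa [Summable.tsum_add hs2 hsn, ← hP2def, ← hNdef, ← hQdef] at this
  have hnQ : δ ≤ Q := by
    have := hn
    simp only [Set.mem_setOf_eq, sub_zero, ← hQdef] at this
    rwa [abs_of_nonneg hQnn] at this
  linarith
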